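/- Let C be a convex subset of a topological real vector space X. Then fri C ⊆ qri C: if x ∈ C satisfies C ⊆ closure(F_min(x,C)), then the closure of cone(C - x) is a linear subspace of X. -/

import Mathlib

open Pointwise

/-- A face of a convex set `C`: a convex subset `F ⊆ C` such that whenever a point of `F`
lies in the open segment between two points of `C`, both endpoints belong to `F`. -/
def IsFace {X : Type*} [AddCommGroup X] [Module ℝ X] (C F : Set X) : Prop :=
  F ⊆ C ∧ Convex ℝ F ∧
    ∀ x ∈ F, ∀ y ∈ C, ∀ z ∈ C, x ∈ openSegment ℝ y z → y ∈ F ∧ z ∈ F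

/-- The minimal face of `C` containing `x`: the intersection of all faces containing `x`. -/
def minFace {X : Type*} [AddCommGroup X] [Module ℝ X] (C : Set X) (x : X) : Set X :=
  ⋂₀ {F | IsFace C F ∧ x ∈ F}

/-- The conic hull of a set. -/
def coneHull {X : Type*} [AddCommGroup X] [Module ℝ X] (S : Set X) : Set X :=
  {w | ∃ (a : ℝ) (s : X), 0 ≤ a ∧ s ∈ S ∧ w = a • s}

/-- The intrinsic core of a convex set. -/
def icr {X : Type*} [AddCommGroup X] [Module ℝ X] (C : Set X) : Set X :=
  {x ∈ C | ∀ y ∈ C, ∃ z ∈ C, x ∈ openSegment ℝ y z}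

/-- The face relative interior of a convex set in a topological vector space. -/
def fri {X : Type*} [AddCommGroup X] [Module ℝ X] [TopologicalSpace X] (C : Set X) : Set X :=
  {x ∈ C | C ⊆ closure (minFace C x)}

theorem minFace_subset_seg {X : Type*} [AddCommGroup X] [Module ℝ X]
    (C : Set X) (hC : Convex ℝ C) (x : X) (hx : x ∈ C) :
    minFace C x ⊆ {y ∈ C | ∃ z ∈ C, x ∈ openSegment ℝ y z} := by
  apply Set.sInter_subset_of_mem
  constructor
  · refine ⟨fun y hy => hy.1, ?_, ?_⟩
    · -- convexity
      rintro y1 ⟨hy1, z1, hz1, a1, b1, ha1, hb1, hab1, hs1⟩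
        y2 ⟨hy2, z2, hz2, a2, b2, ha2, hb2, hab2, hs2⟩ t s ht hs hts
      rcases ht.eq_or_lt with rfl | ht
      · have hs1' : s = 1 := by linarith
        subst hs1'
        simpa using ⟨hy2, z2, hz2, a2, b2, ha2, hb2, hab2, hs2⟩
      rcases hs.eq_or_lt with rfl | hs
      · have ht1' : t = 1 := by linarith
        subst ht1'
        simpa using ⟨hy1, z1, hz1, a1, b1, ha1, hb1, hab1, hs1⟩
      have hb1' : b1 = 1 - a1 := by linarith
      have hb2' : b2 = 1 - a2 := by linarith
      subst hb1' hb2'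
      have ha1' : a1 < 1 := by linarith
      have ha2' : a2 < 1 := by linarith
      have hD : (0:ℝ) < a1 * s + a2 * t := by positivity
      have hE : (0:ℝ) < a2 * t * (1 - a1) + a1 * s * (1 - a2) := by positivity
      have hDne := hD.ne'
      have hEne := hE.ne'
      refine ⟨hC hy1 hy2 ht.le hs.le hts, ?_⟩
      refine ⟨(a2 * t * (1 - a1) / (a2 * t * (1 - a1) + a1 * s * (1 - a2))) • z1 +
              (a1 * s * (1 - a2) / (a2 * t * (1 - a1) + a1 * s * (1 - a2))) • z2,
              hC hz1 hz2 (by positivity) (by positivity)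
                (by rw [← add_div, div_self hEne]), ?_⟩
      refine ⟨a1 * a2 / (a1 * s + a2 * t),
              (a2 * t * (1 - a1) + a1 * s * (1 - a2)) / (a1 * s + a2 * t),
              by positivity, by positivity, ?_, ?_⟩
      · rw [← add_div, div_eq_one_iff_eq hDne]; nlinarith
      · have h1 : (a1 * a2 / (a1 * s + a2 * t)) • (t • y1 + s • y2) +
            ((a2 * t * (1 - a1) + a1 * s * (1 - a2)) / (a1 * s + a2 * t)) •
              ((a2 * t * (1 - a1) / (a2 * t * (1 - a1) + a1 * s * (1 - a2))) • z1 +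
               (a1 * s * (1 - a2) / (a2 * t * (1 - a1) + a1 * s * (1 - a2))) • z2) =
            (a2 * t / (a1 * s + a2 * t)) • (a1 • y1 + (1 - a1) • z1) +
            (a1 * s / (a1 * s + a2 * t)) • (a2 • y2 + (1 - a2) • z2) := by
          match_scalars <;> field_simp
        rw [h1, hs1, hs2, ← add_smul, ← add_div,
          show a2 * t + a1 * s = a1 * s + a2 * t by ring, div_self hDne, one_smul]
    · -- face property
      rintro w ⟨hwC, z, hz, a, b, ha, hb, hab, hsum⟩ u hu v hv ⟨t, s, ht, hs, hts, hw⟩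
      have hb' : b = 1 - a := by linarith
      subst hb'
      have hs' : s = 1 - t := by linarith
      subst hs'
      have ha1 : a < 1 := by linarith
      have ht1 : t < 1 := by linarith
      have hat : a * t < 1 := by nlinarith
      have hat' : a * (1 - t) < 1 := by nlinarith
      have hne : (1:ℝ) - a * t ≠ 0 := by linarith
      have hne' : (1:ℝ) - a * (1 - t) ≠ 0 := by linarith
      constructor
      · refine ⟨hu, (a * (1 - t) / (1 - a * t)) • v + ((1 - a) / (1 - a * t)) • z,
          hC hv hz (div_nonneg (by positivity) (by linarith)) (div_nonneg (by linarith) (by linarith))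
            (by rw [← add_div, div_eq_one_iff_eq hne]; ring), ?_⟩
        refine ⟨a * t, 1 - a * t, by positivity, by linarith, by ring, ?_⟩
        have h2 : (a * t) • u + (1 - a * t) • ((a * (1 - t) / (1 - a * t)) • v +
            ((1 - a) / (1 - a * t)) • z) = a • (t • u + (1 - t) • v) + (1 - a) • z := by
          match_scalars <;> (field_simp [hne]; try ring)
        rw [h2, hw, hsum]
      · refine ⟨hv, (a * t / (1 - a * (1 - t))) • u + ((1 - a) / (1 - a * (1 - t))) • z,
          hC hu hz (div_nonneg (by positivity) (by linarith)) (div_nonneg (by linarith) (by linarith))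
            (by rw [← add_div, div_eq_one_iff_eq hne']; ring), ?_⟩
        refine ⟨a * (1 - t), 1 - a * (1 - t), by positivity, by linarith, by ring, ?_⟩
        have h2 : (a * (1 - t)) • v + (1 - a * (1 - t)) • ((a * t / (1 - a * (1 - t))) • u +
            ((1 - a) / (1 - a * (1 - t))) • z) = a • (t • u + (1 - t) • v) + (1 - a) • z := by
          match_scalars <;> (field_simp [hne']; try ring)
        rw [h2, hw, hsum]
  · exact ⟨hx, x, hx, by rw [openSegment_same]; exact Set.mem_singleton x⟩

/-- `fri C ⊆ qri C`: if `x ∈ C` and `C ⊆ closure (F_min(x,C))`, then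
the closure of `cone (C - x)` is a linear subspace. -/
theorem fri_subset_qri {X : Type*} [AddCommGroup X] [Module ℝ X] [TopologicalSpace X]
    [IsTopologicalAddGroup X] [ContinuousSMul ℝ X]
    (C : Set X) (hC : Convex ℝ C) (x : X) (hx : x ∈ C)
    (hfri : C ⊆ closure (minFace C x)) :
    ∃ S : Submodule ℝ X, closure (coneHull ((fun c => c - x) '' C)) = (S : Set X) := by
  set K := coneHull ((fun c => c - x) '' C) with hKdef
  have hKmem : ∀ y ∈ C, ∀ a : ℝ, 0 ≤ a → a • (y - x) ∈ K := fun y hy a ha =>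
    ⟨a, y - x, ha, ⟨y, hy, rfl⟩, rfl⟩
  have hzeroK : (0 : X) ∈ K := by simpa using hKmem x hx 0 le_rfl
  have hsmulK : ∀ a : ℝ, 0 ≤ a → ∀ w ∈ K, a • w ∈ K := by
    rintro a ha w ⟨a', s, ha', ⟨y, hy, rfl⟩, rfl⟩
    rw [smul_smul]
    exact hKmem y hy _ (mul_nonneg ha ha')
  have haddK : ∀ u ∈ K, ∀ v ∈ K, u + v ∈ K := by
    rintro _ ⟨α, _, hα, ⟨y1, hy1, rfl⟩, rfl⟩ _ ⟨β, _, hβ, ⟨y2, hy2, rfl⟩, rfl⟩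
    rcases (add_nonneg hα hβ).eq_or_lt with h0 | hpos
    · have hα0 : α = 0 := by linarith
      have hβ0 : β = 0 := by linarith
      simp [hα0, hβ0, hzeroK]
    · have hne := hpos.ne'
      have hy' : (α / (α + β)) • y1 + (β / (α + β)) • y2 ∈ C :=
        hC hy1 hy2 (div_nonneg hα hpos.le) (div_nonneg hβ hpos.le)
          (by rw [← add_div, div_self hne])
      have h := hKmem _ hy' (α + β) hpos.le
      have heq : (α + β) • ((α / (α + β)) • y1 + (β / (α + β)) • y2 - x) =
          α • (y1 - x) + β • (y2 - x) := by
        match_scalars <;> (field_simp; try ring)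
      rwa [heq] at h
  have hG := minFace_subset_seg C hC x hx
  have hnegC : ∀ y ∈ C, x - y ∈ closure K := by
    intro y hy
    refine map_mem_closure (f := fun v => x - v) (continuous_const.sub continuous_id)
      (hfri hy) ?_
    intro y' hy'
    obtain ⟨hy'C, z, hz, a, b, ha, hb, hab, hsum⟩ := hG hy'
    have hb' : b = 1 - a := by linarith
    subst hb'
    have hane := ha.ne'
    have hxy : x - y' = ((1 - a) / a) • (z - x) := by
      rw [← hsum]
      match_scalars <;> (field_simp; try ring)
    show x - y' ∈ K
    rw [hxy]
    exact hKmem z hz _ (div_nonneg (by linarith) ha.le)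
  have hnegK : ∀ w ∈ K, -w ∈ closure K := by
    rintro _ ⟨a, _, ha, ⟨y, hy, rfl⟩, rfl⟩
    have h1 : x - y ∈ closure K := hnegC y hy
    have h2 : -(a • (y - x)) = a • (x - y) := by module
    rw [h2]
    exact map_mem_closure (continuous_const_smul a) h1 (fun v hv => hsmulK a ha v hv)
  have hnegM : ∀ u ∈ closure K, -u ∈ closure K := by
    intro u hu
    have h := map_mem_closure continuous_neg hu hnegK
    rwa [closure_closure] at h
  have haddM : ∀ u ∈ closure K, ∀ v ∈ closure K, u + v ∈ closure K := by
    intro u hu v hv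
    exact map_mem_closure₂ continuous_add hu hv haddK
  have hsmulM : ∀ (c : ℝ), ∀ u ∈ closure K, c • u ∈ closure K := by
    intro c u hu
    rcases le_or_gt 0 c with hc | hc
    · exact map_mem_closure (continuous_const_smul c) hu (fun v hv => hsmulK c hc v hv)
    · have h1 : -u ∈ closure K := hnegM u hu
      have h2 : (-c) • (-u) ∈ closure K :=
        map_mem_closure (continuous_const_smul (-c)) h1
          (fun v hv => hsmulK _ (by linarith) v hv)
      rwa [neg_smul_neg] at h2
  exact ⟨{ carrier := closure K
           add_mem' := fun {u v} hu hv => haddM u hu v hv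
           zero_mem' := subset_closure hzeroK
           smul_mem' := fun c {u} hu => hsmulM c u hu }, rfl⟩
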